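/- Let E = {0} ∪ [1/3, 1]. For every x ∈ [0,1] there exists a least integer j ≥ 0 with R^j(x) ∈ E; denoting this least integer by n(x), one has T_EICF(x) = R^{n(x)+1}(x). In other words, the even integer continued fraction map T_EICF is the jump transformation associated to the Romik map R with respect to E. -/

import Mathlib

/-- The Romik map on `[0,1]`. -/
noncomputable def romik (x : ℝ) : ℝ :=
  if x ≤ 1 / 3 then x / (1 - 2 * x)
  else if x ≤ 1 / 2 then 1 / x - 2
  else 2 - 1 / x

/-- The even integer continued fraction map on `[0,1]`: `0 ↦ 0`, and for `k ≥ 1`,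
`x ↦ 1/x - 2k` if `x ∈ [1/(2k+1), 1/(2k)]`, `x ↦ 2k - 1/x` if `x ∈ (1/(2k), 1/(2k-1)]`;
here `k = ⌊(1/x + 1)/2⌋`. -/
noncomputable def eicfT (x : ℝ) : ℝ :=
  if x = 0 then 0
  else if 2 * (⌊(1 / x + 1) / 2⌋ : ℝ) ≤ 1 / x then 1 / x - 2 * (⌊(1 / x + 1) / 2⌋ : ℝ)
  else 2 * (⌊(1 / x + 1) / 2⌋ : ℝ) - 1 / x

lemma romik_iter (x : ℝ) (hx : 0 < x) :
    ∀ n : ℕ, (2 * (n : ℝ) + 1) * x ≤ 1 → romik^[n] x = x / (1 - 2 * n * x) := by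
  intro n
  induction n with
  | zero => simp
  | succ n ih =>
    intro h
    push_cast at h
    have hx1 : (2 * (n : ℝ) + 1) * x ≤ 1 := by nlinarith
    have h3 : 3 * x ≤ 1 - 2 * (n : ℝ) * x := by nlinarith
    have hd : (0:ℝ) < 1 - 2 * (n : ℝ) * x := by nlinarith
    rw [Function.iterate_succ_apply', ih hx1, romik]
    have hle : x / (1 - 2 * (n : ℝ) * x) ≤ 1 / 3 := by
      rw [div_le_div_iff₀ hd (by norm_num)]; nlinarith
    rw [if_pos hle]
    have hd2 : (0:ℝ) < 1 - 2 * ((n : ℝ) + 1) * x := by nlinarith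
    push_cast
    have hne : (1:ℝ) - 2 * (x / (1 - 2 * (n:ℝ) * x)) = (1 - 2 * ((n:ℝ) + 1) * x) / (1 - 2 * (n:ℝ) * x) := by
      rw [eq_div_iff hd.ne', sub_mul, mul_assoc (2:ℝ) (x / (1 - 2 * (n:ℝ) * x)) (1 - 2 * (n:ℝ) * x), div_mul_cancel₀ _ hd.ne']
      ring
    rw [hne, div_div_div_cancel_right₀]
    exact hd.ne'

set_option maxHeartbeats 1000000 in
/-- The even integer continued fraction map is the jump transformation associated to the
Romik map with respect to `E = {0} ∪ [1/3, 1]`: for every `x ∈ [0,1]` there is a least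
`j ≥ 0` with `R^j(x) ∈ E`, and `T_EICF(x) = R^(j+1)(x)`. -/
theorem eicfT_jump_transformation_of_romik
    (x : ℝ) (hx : x ∈ Set.Icc (0 : ℝ) 1) :
    ∃ j : ℕ, romik^[j] x ∈ ({0} : Set ℝ) ∪ Set.Icc (1 / 3 : ℝ) 1 ∧
      (∀ i < j, romik^[i] x ∉ ({0} : Set ℝ) ∪ Set.Icc (1 / 3 : ℝ) 1) ∧
      eicfT x = romik^[j + 1] x := by
  obtain ⟨hx0, hx1⟩ := hx
  rcases eq_or_lt_of_le hx0 with h0 | h0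
  · refine ⟨0, Or.inl (by simp [← h0]), by simp, ?_⟩
    simp only [← h0]
    norm_num [eicfT, romik]
  · set y := 1 / x with hy
    have hy1 : 1 ≤ y := by rw [hy, le_div_iff₀ h0]; linarith
    have hxy : x * y = 1 := by rw [hy, mul_one_div, div_self h0.ne']
    set j : ℕ := (⌈(y - 3) / 2⌉).toNat with hj
    -- j ≥ (y-3)/2
    have hjge : (y - 3) / 2 ≤ (j : ℝ) := by
      calc (y - 3) / 2 ≤ (⌈(y - 3) / 2⌉ : ℝ) := Int.le_ceil _
        _ ≤ ((⌈(y - 3) / 2⌉.toNat : ℤ) : ℝ) := by exact_mod_cast Int.self_le_toNat _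
        _ = (j : ℝ) := by rw [hj]; push_cast; ring
    have hw3 : y - 2 * j ≤ 3 := by linarith
    have hw1 : 1 ≤ y - 2 * j := by
      rcases Nat.eq_zero_or_pos j with h | h
      · rw [h]; push_cast; linarith
      · have : (0:ℤ) < ⌈(y - 3) / 2⌉ := by
          by_contra hc
          push_neg at hc
          simp [hj, Int.toNat_of_nonpos hc] at h
        have hjeq : ((j : ℤ)) = ⌈(y - 3) / 2⌉ := by
          rw [hj]; exact Int.toNat_of_nonneg this.le
        have h2 := Int.ceil_lt_add_one ((y - 3) / 2)
        have h3 : ((j : ℤ) : ℝ) = (⌈(y - 3) / 2⌉ : ℝ) := by exact_mod_cast hjeq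
        push_cast at h3
        linarith
    -- for i < j, strict
    have hlt : ∀ i : ℕ, i < j → 3 < y - 2 * i := by
      intro i hi
      have h1 : (i : ℤ) < ⌈(y - 3) / 2⌉ := by
        rw [← Int.lt_toNat]
        exact hi
      have h2 : ((i : ℤ) : ℝ) ≤ (⌈(y - 3) / 2⌉ : ℝ) - 1 := by exact_mod_cast Int.le_sub_one_of_lt h1
      have := Int.ceil_lt_add_one ((y - 3) / 2)
      push_cast at h2
      linarith
    -- iterate formula applicability
    have hiter : ∀ i : ℕ, (i : ℝ) * 2 + 1 ≤ y → romik^[i] x = x / (1 - 2 * i * x) := by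
      intro i hi
      apply romik_iter x h0
      have : (2 * (i : ℝ) + 1) * x ≤ y * x := by nlinarith
      nlinarith
    have hzj : romik^[j] x = x / (1 - 2 * j * x) := hiter j (by linarith)
    have hdj : (0:ℝ) < 1 - 2 * j * x := by nlinarith
    set z : ℝ := x / (1 - 2 * j * x) with hz
    have hz0 : 0 < z := div_pos h0 hdj
    have hzinv : 1 / z = y - 2 * j := by
      rw [hz]; field_simp; nlinarith
    have hz3 : 1 / 3 ≤ z := by
      rw [hz, le_div_iff₀ hdj]; nlinarith
    have hz1 : z ≤ 1 := by
      rw [hz, div_le_one hdj]; nlinarith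
    refine ⟨j, Or.inr ⟨by rw [hzj]; exact hz3, by rw [hzj]; exact hz1⟩, ?_, ?_⟩
    · intro i hi h
      have h3 := hlt i hi
      have hfi : romik^[i] x = x / (1 - 2 * i * x) := hiter i (by linarith)
      have hdi : (0:ℝ) < 1 - 2 * i * x := by nlinarith
      have hpos : 0 < romik^[i] x := by rw [hfi]; exact div_pos h0 hdi
      have hsmall : romik^[i] x < 1 / 3 := by
        rw [hfi, div_lt_div_iff₀ hdi (by norm_num)]; nlinarith
      rcases h with h | h
      · simp at h; linarith
      · exact absurd h.1 (by linarith)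
    · -- eicfT x = romik^[j+1] x
      rw [Function.iterate_succ_apply', hzj]
      have hxne : x ≠ 0 := ne_of_gt h0
      rw [eicfT, if_neg hxne, ← hy]
      have hmul : z * (y - 2 * (j : ℝ)) = 1 := by
        rw [← hzinv, mul_one_div, div_self hz0.ne']
      clear_value z y
      rcases eq_or_lt_of_le hw3 with hweq | hwlt
      · -- y - 2j = 3 : z = 1/3
        have hzeq : z = 1 / 3 := by nlinarith
        have hk : ⌊(y + 1) / 2⌋ = (j : ℤ) + 2 := by
          have h1 : (y + 1) / 2 = (((j : ℤ) + 2 : ℤ) : ℝ) := by push_cast; linarith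
          rw [h1, Int.floor_intCast]
        rw [hk]
        push_cast
        rw [if_neg (by linarith), romik, if_pos (le_of_eq hzeq), hzeq]
        norm_num
        linarith
      · have hk : ⌊(y + 1) / 2⌋ = (j : ℤ) + 1 := by
          rw [Int.floor_eq_iff]
          constructor
          · push_cast; linarith
          · push_cast; linarith
        rw [hk]
        push_cast
        rcases le_or_gt 2 (y - 2 * (j : ℝ)) with hw2 | hw2
        · -- z ∈ (1/3, 1/2]
          have hzlt : 1 / 3 < z := by nlinarith
          have hzle : z ≤ 1 / 2 := by nlinarith
          rw [if_pos (by linarith), romik, if_neg (by linarith), if_pos hzle, hzinv]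
          ring
        · -- z ∈ (1/2, 1]
          have hzgt : 1 / 2 < z := by nlinarith
          rw [if_neg (by linarith), romik, if_neg (by linarith), if_neg (by linarith), hzinv]
          ring
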